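/- arXiv:2110.06848 — 2 statements merged into one kernel-verified Lean document; each statement's English description precedes it below -/
import Mathlib

section
/- Gradient of the InfoNCE loss with respect to the anchor embedding (Proposition 1, first identity): the function F : E → ℝ defined by F(z) = -log( exp(⟪z, z₂⟫/τ) / ( exp(⟪z, z₂⟫/τ) + ∑_{j} exp(⟪z, v j⟫/τ) ) ) is differentiable at z₁, and its gradient at z₁ equals -(q/τ) • ( z₂ - ∑_{j} ( exp(⟪z₁, v j⟫/τ) / U ) • v j ), where U = ∑_{j} exp(⟪z₁, v j⟫/τ) and q = U / ( exp(⟪z₁, z₂⟫/τ) + U ). -/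
open Real RealInnerProductSpace

/-- Proposition 1, first identity: gradient of the InfoNCE loss with respect to
the anchor embedding `z₁`. -/
theorem infoNCE_gradient_anchor
    {E : Type*} [NormedAddCommGroup E] [InnerProductSpace ℝ E] [CompleteSpace E]
    {τ : ℝ} (hτ : 0 < τ) (z₁ z₂ : E) {m : ℕ} (hm : 1 ≤ m) (v : Fin m → E) :
    DifferentiableAt ℝ
      (fun z : E => -Real.log (Real.exp (⟪z, z₂⟫ / τ) /
        (Real.exp (⟪z, z₂⟫ / τ) + ∑ j, Real.exp (⟪z, v j⟫ / τ)))) z₁ ∧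
    gradient (fun z : E => -Real.log (Real.exp (⟪z, z₂⟫ / τ) /
        (Real.exp (⟪z, z₂⟫ / τ) + ∑ j, Real.exp (⟪z, v j⟫ / τ)))) z₁ =
      -(((∑ j, Real.exp (⟪z₁, v j⟫ / τ)) /
          (Real.exp (⟪z₁, z₂⟫ / τ) + ∑ j, Real.exp (⟪z₁, v j⟫ / τ))) / τ) •
        (z₂ - ∑ j, (Real.exp (⟪z₁, v j⟫ / τ) /
          (∑ i, Real.exp (⟪z₁, v i⟫ / τ))) • v j) := by
  set F : E → ℝ := fun z => -Real.log (Real.exp (⟪z, z₂⟫ / τ) /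
        (Real.exp (⟪z, z₂⟫ / τ) + ∑ j, Real.exp (⟪z, v j⟫ / τ))) with hF
  set a : ℝ := Real.exp (⟪z₁, z₂⟫ / τ) with ha
  set U : ℝ := ∑ j, Real.exp (⟪z₁, v j⟫ / τ) with hU
  have hUpos : 0 < U := by
    apply Finset.sum_pos (fun j _ => Real.exp_pos _)
    exact Finset.univ_nonempty_iff.mpr (Fin.pos_iff_nonempty.mp (by omega))
  have hapos : 0 < a := Real.exp_pos _
  have hgpos : 0 < a + U := by positivity
  have hFeq : F = fun z : E =>
      Real.log (Real.exp (⟪z, z₂⟫ / τ) + ∑ j, Real.exp (⟪z, v j⟫ / τ)) - ⟪z, z₂⟫ / τ := by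
    funext z
    have h1 : (0:ℝ) < Real.exp (⟪z, z₂⟫ / τ) := Real.exp_pos _
    have h2 : (0:ℝ) < Real.exp (⟪z, z₂⟫ / τ) + ∑ j, Real.exp (⟪z, v j⟫ / τ) := by
      have : (0:ℝ) < ∑ j, Real.exp (⟪z, v j⟫ / τ) := by
        apply Finset.sum_pos (fun j _ => Real.exp_pos _)
        exact Finset.univ_nonempty_iff.mpr (Fin.pos_iff_nonempty.mp (by omega))
      positivity
    simp only [hF]
    rw [Real.log_div h1.ne' h2.ne', Real.log_exp]
    ring
  set G : E := -((U / (a + U)) / τ) •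
        (z₂ - ∑ j, (Real.exp (⟪z₁, v j⟫ / τ) / U) • v j) with hG
  have key : HasGradientAt F G z₁ := by
    rw [hasGradientAt_iff_hasFDerivAt, hFeq]
    have hin : ∀ w : E, HasFDerivAt (fun z : E => ⟪z, w⟫ / τ)
        (τ⁻¹ • innerSL ℝ w) z₁ := by
      intro w
      have h := ((τ⁻¹ : ℝ) • innerSL ℝ w).hasFDerivAt (x := z₁)
      have heq : ⇑((τ⁻¹ : ℝ) • innerSL ℝ w) = fun z : E => ⟪z, w⟫ / τ := by
        funext z
        simp only [ContinuousLinearMap.smul_apply, innerSL_apply_apply, smul_eq_mul]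
        rw [real_inner_comm]; ring
      rwa [heq] at h
    have hexp : ∀ w : E, HasFDerivAt (fun z : E => Real.exp (⟪z, w⟫ / τ))
        (Real.exp (⟪z₁, w⟫ / τ) • (τ⁻¹ • innerSL ℝ w)) z₁ := fun w => (hin w).exp
    have hsum : HasFDerivAt (fun z : E => ∑ j, Real.exp (⟪z, v j⟫ / τ))
        (∑ j, Real.exp (⟪z₁, v j⟫ / τ) • (τ⁻¹ • innerSL ℝ (v j))) z₁ :=
      HasFDerivAt.fun_sum (fun j _ => hexp (v j))
    have hg : HasFDerivAt (fun z : E => Real.exp (⟪z, z₂⟫ / τ) + ∑ j, Real.exp (⟪z, v j⟫ / τ))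
        (a • (τ⁻¹ • innerSL ℝ z₂) + ∑ j, Real.exp (⟪z₁, v j⟫ / τ) • (τ⁻¹ • innerSL ℝ (v j))) z₁ :=
      (hexp z₂).add hsum
    have hlog := hg.log hgpos.ne'
    have hfull := hlog.sub (hin z₂)
    refine hfull.congr_fderiv ?_
    ext y
    simp only [ContinuousLinearMap.coe_sub', Pi.sub_apply, ContinuousLinearMap.smul_apply,
      ContinuousLinearMap.add_apply, ContinuousLinearMap.coe_sum', Finset.sum_apply,
      InnerProductSpace.toDual_apply_apply, innerSL_apply_apply, smul_eq_mul, hG]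
    rw [inner_smul_left, inner_sub_left, sum_inner]
    simp only [inner_smul_left, conj_trivial, RCLike.star_def, map_neg, map_div₀, map_mul]
    have h1 : ∑ j, (Real.exp (⟪z₁, v j⟫ / τ) / U) * ⟪v j, y⟫
        = (∑ j, Real.exp (⟪z₁, v j⟫ / τ) * ⟪v j, y⟫) / U := by
      rw [Finset.sum_div]
      exact Finset.sum_congr rfl fun j _ => div_mul_eq_mul_div _ _ _
    have h2 : ∑ x : Fin m, Real.exp (⟪z₁, v x⟫ / τ) * (τ⁻¹ * ⟪v x, y⟫)
        = τ⁻¹ * ∑ j, Real.exp (⟪z₁, v j⟫ / τ) * ⟪v j, y⟫ := by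
      rw [Finset.mul_sum]
      exact Finset.sum_congr rfl fun j _ => by ring
    rw [h1, h2, ← ha, ← hU]
    set S := ∑ j, Real.exp (⟪z₁, v j⟫ / τ) * ⟪v j, y⟫ with hS
    clear_value S
    clear h1 h2 hS
    generalize (⟪z₂, y⟫ : ℝ) = P
    have h3 : U ≠ 0 := hUpos.ne'
    have h4 : a + U ≠ 0 := hgpos.ne'
    have h5 : τ ≠ 0 := hτ.ne'
    clear hF hFeq hG hlog hfull hg hsum hexp hin hU ha
    clear_value a U
    clear F G v z₁ z₂ hm m y hτ hUpos hapos
    field_simp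
    ring
  exact ⟨key.differentiableAt, key.gradient⟩
end

section
/- The NPC multiplier tends to 1 as the batch size tends to infinity: for any sequence of batches indexed by m ∈ ℕ, consisting of unit vectors z₁(m), z₂(m) ∈ E and a family v(m) : Fin m → E of unit vectors, the NPC multipliers q(m) = U(m) / ( exp(⟪z₁(m), z₂(m)⟫/τ) + U(m) ), where U(m) = ∑_{j} exp(⟪z₁(m), v(m) j⟫/τ), satisfy q(m) → 1 as m → ∞. Consequently the InfoNCE loss gradient converges to the DCL loss gradient in the infinite-batch-size limit. -/
open Real RealInnerProductSpace Filter

/-- The NPC multiplier tends to `1` as the batch size tends to infinity for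
batches of unit vectors. -/
theorem npc_multiplier_tendsto_one
    {E : Type*} [NormedAddCommGroup E] [InnerProductSpace ℝ E] [CompleteSpace E]
    {τ : ℝ} (hτ : 0 < τ) (z₁ z₂ : ℕ → E) (v : (m : ℕ) → Fin m → E)
    (hz₁ : ∀ m, ‖z₁ m‖ = 1) (hz₂ : ∀ m, ‖z₂ m‖ = 1)
    (hv : ∀ m, ∀ j : Fin m, ‖v m j‖ = 1) :
    Tendsto (fun m : ℕ =>
        (∑ j, Real.exp (⟪z₁ m, v m j⟫ / τ)) /
          (Real.exp (⟪z₁ m, z₂ m⟫ / τ) + ∑ j, Real.exp (⟪z₁ m, v m j⟫ / τ)))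
      atTop (nhds 1) := by
  set A : ℕ → ℝ := fun m => Real.exp (⟪z₁ m, z₂ m⟫ / τ) with hA
  set U : ℕ → ℝ := fun m => ∑ j, Real.exp (⟪z₁ m, v m j⟫ / τ) with hU
  have hUnn : ∀ m, 0 ≤ U m := fun m =>
    Finset.sum_nonneg fun j _ => (Real.exp_pos _).le
  have hden : ∀ m, 0 < A m + U m := fun m =>
    lt_of_lt_of_le (Real.exp_pos _) (le_add_of_nonneg_right (hUnn m))
  have hUge : ∀ m : ℕ, (m : ℝ) * Real.exp (-(1 / τ)) ≤ U m := by
    intro m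
    have h : ∀ j ∈ Finset.univ (α := Fin m),
        Real.exp (-(1 / τ)) ≤ Real.exp (⟪z₁ m, v m j⟫ / τ) := by
      intro j _
      apply Real.exp_le_exp.2
      rw [show -(1/τ) = (-1)/τ by ring]
      apply div_le_div_of_nonneg_right _ hτ.le
      have h2 := abs_real_inner_le_norm (z₁ m) (v m j)
      rw [hz₁ m, hv m j, mul_one] at h2
      linarith [neg_abs_le (⟪z₁ m, v m j⟫ : ℝ)]
    calc (m : ℝ) * Real.exp (-(1 / τ))
        = ∑ _j : Fin m, Real.exp (-(1 / τ)) := by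
          simp [Finset.sum_const, nsmul_eq_mul]
      _ ≤ U m := Finset.sum_le_sum h
  have hAle : ∀ m, A m ≤ Real.exp (1 / τ) := by
    intro m
    apply Real.exp_le_exp.2
    rw [show (1:ℝ)/τ = 1/τ from rfl]
    apply div_le_div_of_nonneg_right _ hτ.le
    have h2 := abs_real_inner_le_norm (z₁ m) (z₂ m)
    rw [hz₁ m, hz₂ m, mul_one] at h2
    linarith [le_abs_self (⟪z₁ m, z₂ m⟫ : ℝ)]
  -- show residual tends to 0
  have hres : Tendsto (fun m => A m / (A m + U m)) atTop (nhds 0) := by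
    apply squeeze_zero'
      (g := fun m : ℕ => Real.exp (1 / τ) / ((m : ℝ) * Real.exp (-(1 / τ))))
      (Filter.Eventually.of_forall fun m : ℕ => div_nonneg (Real.exp_pos _).le (hden m).le)
    · filter_upwards [Filter.eventually_ge_atTop 1] with m hm
      have hpos : 0 < (m : ℝ) * Real.exp (-(1 / τ)) :=
        mul_pos (by exact_mod_cast hm) (Real.exp_pos _)
      apply div_le_div₀ (Real.exp_pos _).le (hAle m) hpos
      exact le_trans (hUge m) (le_add_of_nonneg_left (Real.exp_pos _).le)
    · have : Tendsto (fun m : ℕ => (m : ℝ) * Real.exp (-(1 / τ))) atTop atTop :=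
        Tendsto.atTop_mul_const (Real.exp_pos _) tendsto_natCast_atTop_atTop
      simpa [div_eq_mul_inv] using this.inv_tendsto_atTop.const_mul (Real.exp (1 / τ))
  have key : ∀ m, U m / (A m + U m) = 1 - A m / (A m + U m) := by
    intro m
    rw [eq_sub_iff_add_eq, ← add_div, add_comm, div_self (hden m).ne']
  simp only [hA, hU] at key ⊢
  rw [show (1 : ℝ) = 1 - 0 by ring]
  simpa [key] using (tendsto_const_nhds.sub hres)
end
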